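/- arXiv:1609.01089 — 13 statements merged into one kernel-verified Lean document; each statement's English description precedes it below -/
import Mathlib

section
/- Let X ∈ R^{n×n}, f ∈ R, and a(x) ∈ R[x] a nonzero polynomial such that a(f·I - X) = 0. Then X · p(f·I, f·I - X; a) = p(f·I, f·I - X; a) · X = a(f) · I. -/
private lemma tel {R A : Type*} [CommRing R] [Ring A] [Algebra R A] (f : R) (Y : A) :
    ∀ k : ℕ, (f • (1 : A) - Y) * ∑ i ∈ Finset.range k, f ^ i • Y ^ (k - 1 - i)
      = f ^ k • (1 : A) - Y ^ k := by
  intro k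
  induction k with
  | zero => simp
  | succ k ih =>
    have hsplit : (∑ i ∈ Finset.range (k+1), f ^ i • Y ^ (k + 1 - 1 - i))
        = (∑ i ∈ Finset.range k, f ^ i • Y ^ (k - 1 - i)) * Y + f ^ k • (1 : A) := by
      rw [Finset.sum_range_succ]
      simp only [Nat.add_sub_cancel, Nat.sub_self, pow_zero]
      congr 1
      rw [Finset.sum_mul]
      apply Finset.sum_congr rfl
      intro i hi
      rw [Finset.mem_range] at hi
      rw [smul_mul_assoc, ← pow_succ]
      congr 2
      omega
    rw [hsplit, mul_add, ← mul_assoc, ih]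
    rw [sub_mul, smul_mul_assoc, one_mul, mul_smul_comm, mul_one, smul_sub,
      smul_smul, pow_succ, pow_succ]
    abel

private lemma tel' {R A : Type*} [CommRing R] [Ring A] [Algebra R A] (f : R) (Y : A) (k : ℕ) :
    (∑ i ∈ Finset.range k, f ^ i • Y ^ (k - 1 - i)) * (f • (1 : A) - Y)
      = f ^ k • (1 : A) - Y ^ k := by
  rw [← tel f Y k]
  apply Commute.eq
  refine Commute.sum_left _ _ _ fun i _ => Commute.sub_right ?_ ?_
  · exact ((Commute.one_right (Y ^ (k - 1 - i))).smul_right f).smul_left (f ^ i)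
  · exact (((Commute.refl Y).pow_left (k - 1 - i)).smul_left (f ^ i))

/-- If `a(f·I - X) = 0` then `X · p(f·I, f·I - X; a) = p(f·I, f·I - X; a) · X = a(f) · I`. -/
theorem stmt2 {R : Type*} [CommRing R] {n : ℕ} (d : ℕ) (a : ℕ → R)
    (X : Matrix (Fin n) (Fin n) R) (f : R)
    (hane : ∃ k, k ≤ d ∧ a k ≠ 0)
    (hann : ∑ k ∈ Finset.range (d + 1),
        a k • (f • (1 : Matrix (Fin n) (Fin n) R) - X) ^ k = 0) :
    X * (∑ k ∈ Finset.range (d + 1),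
          a k • ∑ i ∈ Finset.range k,
            f ^ i • (f • (1 : Matrix (Fin n) (Fin n) R) - X) ^ (k - 1 - i)) =
      (∑ k ∈ Finset.range (d + 1), a k * f ^ k) • (1 : Matrix (Fin n) (Fin n) R) ∧
    (∑ k ∈ Finset.range (d + 1),
          a k • ∑ i ∈ Finset.range k,
            f ^ i • (f • (1 : Matrix (Fin n) (Fin n) R) - X) ^ (k - 1 - i)) * X =
      (∑ k ∈ Finset.range (d + 1), a k * f ^ k) • (1 : Matrix (Fin n) (Fin n) R) := by
  set Y := f • (1 : Matrix (Fin n) (Fin n) R) - X with hY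
  have hX : X = f • (1 : Matrix (Fin n) (Fin n) R) - Y := by rw [hY]; abel
  constructor
  · rw [hX, Finset.mul_sum]
    calc ∑ k ∈ Finset.range (d+1),
          (f • (1 : Matrix (Fin n) (Fin n) R) - Y) * (a k • ∑ i ∈ Finset.range k, f ^ i • Y ^ (k - 1 - i))
        = ∑ k ∈ Finset.range (d+1), ((a k * f ^ k) • (1 : Matrix (Fin n) (Fin n) R) - a k • Y ^ k) := by
          apply Finset.sum_congr rfl; intro k _
          rw [mul_smul_comm, tel, smul_sub, smul_smul]
      _ = _ := by
          rw [Finset.sum_sub_distrib, hann, sub_zero, ← Finset.sum_smul]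
  · rw [hX, Finset.sum_mul]
    calc ∑ k ∈ Finset.range (d+1),
          (a k • ∑ i ∈ Finset.range k, f ^ i • Y ^ (k - 1 - i)) * (f • (1 : Matrix (Fin n) (Fin n) R) - Y)
        = ∑ k ∈ Finset.range (d+1), ((a k * f ^ k) • (1 : Matrix (Fin n) (Fin n) R) - a k • Y ^ k) := by
          apply Finset.sum_congr rfl; intro k _
          rw [smul_mul_assoc, tel', smul_sub, smul_smul]
      _ = _ := by
          rw [Finset.sum_sub_distrib, hann, sub_zero, ← Finset.sum_smul]
end

section
/- Let M = [[A, B], [C, D]] be an (n+s)×(n+s) block matrix over a commutative ring R, P ∈ R^{n×n} with P·A = A·P = a·I_n for some a ∈ R, and S = a·D - C·P·B. Then a^s · det(M) = det(A) · det(S). -/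
open Matrix

/-- Schur-like complement determinant identity:
`a^s · det M = det A · det S` where `S = a·D - C·P·B` and `P·A = A·P = a·I`. -/
theorem stmt4 {R : Type*} [CommRing R] {n s : ℕ}
    (A P : Matrix (Fin n) (Fin n) R) (B : Matrix (Fin n) (Fin s) R)
    (C : Matrix (Fin s) (Fin n) R) (D : Matrix (Fin s) (Fin s) R) (a : R)
    (hPA : P * A = a • (1 : Matrix (Fin n) (Fin n) R))
    (hAP : A * P = a • (1 : Matrix (Fin n) (Fin n) R)) :
    a ^ s * (Matrix.fromBlocks A B C D).det =
      A.det * (a • D - C * P * B).det := by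
  have key : (Matrix.fromBlocks (1 : Matrix (Fin n) (Fin n) R) 0 (-(C * P))
      (a • (1 : Matrix (Fin s) (Fin s) R))) * Matrix.fromBlocks A B C D =
      Matrix.fromBlocks A B 0 (a • D - C * P * B) := by
    rw [Matrix.fromBlocks_multiply]
    simp [Matrix.mul_assoc, hPA, neg_add_eq_sub]
  have hdet := congrArg Matrix.det key
  rw [Matrix.det_mul, Matrix.det_fromBlocks_zero₁₂, Matrix.det_fromBlocks_zero₂₁] at hdet
  simpa [Matrix.smul_eq_diagonal_mul] using hdet
end

section
/- Let M = [[A, B], [C, D]] be an (n+s)×(n+s) block matrix over a commutative ring R and R' = [[R_A, R_B], [R_C, R_D]] a matrix partitioned conformally with R'·M = m·I_{n+s} for some m ∈ R. Then det(R_D) · det(M) = det(A) · m^s. -/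
/-- Opponent determinant identity: if `R'·M = m·I` with lower-right block `R_D`, then
`det R_D · det M = det A · m^s`. -/
theorem stmt5 {R : Type*} [CommRing R] {n s : ℕ}
    (A RA : Matrix (Fin n) (Fin n) R) (B RB : Matrix (Fin n) (Fin s) R)
    (C RC : Matrix (Fin s) (Fin n) R) (D RD : Matrix (Fin s) (Fin s) R) (m : R)
    (hRM : Matrix.fromBlocks RA RB RC RD * Matrix.fromBlocks A B C D =
      m • (1 : Matrix (Fin n ⊕ Fin s) (Fin n ⊕ Fin s) R)) :
    RD.det * (Matrix.fromBlocks A B C D).det = A.det * m ^ s := by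
  rw [Matrix.fromBlocks_multiply] at hRM
  have h1 : (m • (1 : Matrix (Fin n ⊕ Fin s) (Fin n ⊕ Fin s) R)) =
      Matrix.fromBlocks (m • 1) 0 0 (m • 1) := by
    rw [← Matrix.fromBlocks_one, Matrix.fromBlocks_smul]
    simp
  rw [h1] at hRM
  have h21 : RC * A + RD * C = 0 := by
    have := congrArg Matrix.toBlocks₂₁ hRM
    simpa [Matrix.toBlocks_fromBlocks₂₁] using this
  have h22 : RC * B + RD * D = m • 1 := by
    have := congrArg Matrix.toBlocks₂₂ hRM
    simpa [Matrix.toBlocks_fromBlocks₂₂] using this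
  have key : Matrix.fromBlocks (1 : Matrix (Fin n) (Fin n) R) 0 RC RD *
      Matrix.fromBlocks A B C D = Matrix.fromBlocks A B 0 (m • 1) := by
    rw [Matrix.fromBlocks_multiply, h21, h22]
    simp
  have := congrArg Matrix.det key
  rw [Matrix.det_mul, Matrix.det_fromBlocks_zero₁₂, Matrix.det_fromBlocks_zero₂₁] at this
  simpa [Matrix.det_smul, mul_comm] using this
end

section
/- Let M = [[A, B], [C, D]] over a commutative ring R with P·A = A·P = a·I_n, R'·M = m·I_{n+s} where R' has lower-right s×s block R_D, and S = a·D - C·P·B. Then R_D · S = a·m·I_s. -/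
/-- Relation between the opponent and the Schur-like complement: `R_D · S = a·m·I_s`. -/
theorem stmt6 {R : Type*} [CommRing R] {n s : ℕ}
    (A P RA : Matrix (Fin n) (Fin n) R) (B RB : Matrix (Fin n) (Fin s) R)
    (C RC : Matrix (Fin s) (Fin n) R) (D RD : Matrix (Fin s) (Fin s) R) (a m : R)
    (hPA : P * A = a • (1 : Matrix (Fin n) (Fin n) R))
    (hAP : A * P = a • (1 : Matrix (Fin n) (Fin n) R))
    (hRM : Matrix.fromBlocks RA RB RC RD * Matrix.fromBlocks A B C D =
      m • (1 : Matrix (Fin n ⊕ Fin s) (Fin n ⊕ Fin s) R)) :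
    RD * (a • D - C * P * B) = (a * m) • (1 : Matrix (Fin s) (Fin s) R) := by
  rw [Matrix.fromBlocks_multiply, ← Matrix.fromBlocks_one, Matrix.fromBlocks_smul,
    Matrix.fromBlocks_inj] at hRM
  obtain ⟨h11, h12, h21, h22⟩ := hRM
  rw [smul_zero] at h21
  have h21' : RD * C = -(RC * A) := by
    rw [eq_neg_iff_add_eq_zero, add_comm]; exact h21
  have key : RD * (C * P * B) = -(a • (RC * B)) := by
    rw [← Matrix.mul_assoc, ← Matrix.mul_assoc, h21']
    rw [Matrix.neg_mul, Matrix.neg_mul, Matrix.mul_assoc RC A P, hAP,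
      Matrix.mul_smul, Matrix.mul_one, Matrix.smul_mul]
  have h22' : RD * D = m • 1 - RC * B := by
    rw [← h22]; abel
  rw [Matrix.mul_sub, Matrix.mul_smul, h22', key, smul_sub, sub_neg_eq_add,
    smul_smul, sub_add_cancel]
end

section
/- Let M = [[A, B], [C, D]] over a commutative ring, P with P·A = A·P = a·I_n, S = a·D - C·P·B, L = [[I_n, 0], [-C·P, a·I_s]] and U = [[I_n, -P·B], [0, a·I_s]]. Then L·M = [[A, B], [0, S]], M·U = [[A, 0], [C, S]], and L·M·U = [[A, 0], [0, a·S]]. -/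
/-- Schur-like multiplier identities:
`L·M = [[A,B],[0,S]]`, `M·U = [[A,0],[C,S]]`, `L·M·U = [[A,0],[0,a·S]]`. -/
theorem stmt7 {R : Type*} [CommRing R] {n s : ℕ}
    (A P : Matrix (Fin n) (Fin n) R) (B : Matrix (Fin n) (Fin s) R)
    (C : Matrix (Fin s) (Fin n) R) (D : Matrix (Fin s) (Fin s) R) (a : R)
    (hPA : P * A = a • (1 : Matrix (Fin n) (Fin n) R))
    (hAP : A * P = a • (1 : Matrix (Fin n) (Fin n) R)) :
    let M := Matrix.fromBlocks A B C D
    let S := a • D - C * P * B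
    let L := Matrix.fromBlocks 1 0 (-(C * P)) (a • (1 : Matrix (Fin s) (Fin s) R))
    let U := Matrix.fromBlocks 1 (-(P * B)) 0 (a • (1 : Matrix (Fin s) (Fin s) R))
    L * M = Matrix.fromBlocks A B 0 S ∧
    M * U = Matrix.fromBlocks A 0 C S ∧
    L * M * U = Matrix.fromBlocks A 0 0 (a • S) := by
  intro M S L U
  have hAPB : A * (P * B) = a • B := by
    rw [← Matrix.mul_assoc, hAP, Matrix.smul_mul, Matrix.one_mul]
  have hCPA : C * P * A = a • C := by
    rw [Matrix.mul_assoc, hPA, Matrix.mul_smul, Matrix.mul_one]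
  have h1 : L * M = Matrix.fromBlocks A B 0 S := by
    simp only [M, S, L, Matrix.fromBlocks_multiply]
    congr 1 <;>
      simp [Matrix.mul_smul, Matrix.smul_mul, Matrix.neg_mul, hCPA, Matrix.mul_assoc,
        sub_eq_add_neg, add_comm]
  have h2 : M * U = Matrix.fromBlocks A 0 C S := by
    simp only [M, S, U, Matrix.fromBlocks_multiply]
    congr 1 <;>
      simp [Matrix.mul_smul, Matrix.smul_mul, Matrix.mul_neg, hAPB, hCPA, Matrix.mul_assoc,
        sub_eq_add_neg, add_comm]
  refine ⟨h1, h2, ?_⟩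
  rw [h1]
  simp only [S, U, Matrix.fromBlocks_multiply]
  congr 1 <;>
    simp [Matrix.mul_smul, Matrix.smul_mul, Matrix.mul_neg, hAPB, hCPA, Matrix.mul_assoc,
      sub_eq_add_neg, add_comm, smul_sub, mul_sub, sub_mul]
end

section
/- Let M = [[A, B], [C, D]] over a commutative ring R with multiplicative absolute value, P ∈ R^{n×n} not all zero, a ∈ R with P·A = a·I_n, and S = a·D - C·P·B. If M is strictly diagonally dominant, then S is strictly diagonally dominant. -/
section
variable {R : Type*} [CommRing R] (v : R → ℝ)

lemma my_vsum (hv0 : v (0:R) = 0) (hvadd : ∀ r r' : R, v (r + r') ≤ v r + v r')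
    {ι : Type*} (t : Finset ι) (f : ι → R) :
    v (∑ i ∈ t, f i) ≤ ∑ i ∈ t, v (f i) := by
  classical
  induction t using Finset.induction_on with
  | empty => simp [hv0]
  | insert a s h ih =>
    rw [Finset.sum_insert h, Finset.sum_insert h]
    exact (hvadd _ _).trans (by linarith)

lemma my_vneg (hvnn : ∀ r : R, 0 ≤ v r) (hvmul : ∀ r r' : R, v (r * r') = v r * v r')
    (r : R) : v (-r) = v r := by
  have h : v (-r) * v (-r) = v r * v r := by
    rw [← hvmul, ← hvmul, neg_mul_neg]
  exact (mul_self_inj_of_nonneg (hvnn _) (hvnn _)).mp h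

lemma my_vsub (hvnn : ∀ r : R, 0 ≤ v r) (hvadd : ∀ r r' : R, v (r + r') ≤ v r + v r')
    (hvmul : ∀ r r' : R, v (r * r') = v r * v r') (r r' : R) : v (r - r') ≤ v r + v r' := by
  rw [sub_eq_add_neg]
  exact (hvadd _ _).trans (by rw [my_vneg v hvnn hvmul])

/-- Key row-vector lemma : if `y · A = z` then `∑ v(y l) d l ≤ ∑ v(z k)`. -/
lemma my_key (hv0 : v (0:R) = 0) (hvnn : ∀ r : R, 0 ≤ v r)
    (hvadd : ∀ r r' : R, v (r + r') ≤ v r + v r')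
    (hvmul : ∀ r r' : R, v (r * r') = v r * v r')
    {n : ℕ} (A : Matrix (Fin n) (Fin n) R) (y z : Fin n → R)
    (hz : ∀ k, ∑ l, y l * A l k = z k) :
    ∑ l, v (y l) * (v (A l l) - ∑ k ∈ Finset.univ.erase l, v (A l k)) ≤ ∑ k, v (z k) := by
  have swap : ∑ l, ∑ k ∈ Finset.univ.erase l, v (y l) * v (A l k)
      = ∑ k, ∑ l ∈ Finset.univ.erase k, v (y l) * v (A l k) := by
    simp only [Finset.sum_erase_eq_sub (Finset.mem_univ _), Finset.sum_sub_distrib]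
    rw [Finset.sum_comm]
  have step : ∀ k, v (y k) * v (A k k) ≤ v (z k) + ∑ l ∈ Finset.univ.erase k, v (y l) * v (A l k) := by
    intro k
    have h1 : y k * A k k = z k - ∑ l ∈ Finset.univ.erase k, y l * A l k := by
      rw [← hz k, ← Finset.add_sum_erase _ _ (Finset.mem_univ k)]
      ring
    calc v (y k) * v (A k k) = v (y k * A k k) := (hvmul _ _).symm
      _ ≤ v (z k) + v (∑ l ∈ Finset.univ.erase k, y l * A l k) := by
          rw [h1]; exact my_vsub v hvnn hvadd hvmul _ _
      _ ≤ v (z k) + ∑ l ∈ Finset.univ.erase k, v (y l * A l k) := by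
          have := my_vsum v hv0 hvadd (Finset.univ.erase k) (fun l => y l * A l k)
          linarith
      _ = v (z k) + ∑ l ∈ Finset.univ.erase k, v (y l) * v (A l k) := by
          simp only [hvmul]
  calc ∑ l, v (y l) * (v (A l l) - ∑ k ∈ Finset.univ.erase l, v (A l k))
      = ∑ l, (v (y l) * v (A l l) - ∑ k ∈ Finset.univ.erase l, v (y l) * v (A l k)) := by
        congr 1; ext l; rw [mul_sub, Finset.mul_sum]
    _ = ∑ l, v (y l) * v (A l l) - ∑ k, ∑ l ∈ Finset.univ.erase k, v (y l) * v (A l k) := by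
        rw [Finset.sum_sub_distrib, swap]
    _ ≤ ∑ k, v (z k) := by
        have := Finset.sum_le_sum (fun k (_ : k ∈ Finset.univ) => step k)
        rw [Finset.sum_add_distrib] at this
        linarith

end

/-- `X` is strictly diagonally dominant w.r.t. the absolute value `v`. -/
def IsSD {R : Type*} [CommRing R] {ι : Type*} [Fintype ι] [DecidableEq ι]
    (v : R → ℝ) (X : Matrix ι ι R) : Prop :=
  ∀ i, (∑ k ∈ Finset.univ.erase i, v (X i k)) < v (X i i)

/-- If `M = [[A,B],[C,D]]` is strictly diagonally dominant, `P ≠ 0` and `P·A = a·I`, then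
the Schur-like complement `S = a·D - C·P·B` is strictly diagonally dominant. -/
theorem stmt8 {R : Type*} [CommRing R] {n s : ℕ} (v : R → ℝ)
    (hv0 : ∀ r : R, v r = 0 ↔ r = 0)
    (hvnn : ∀ r : R, 0 ≤ v r)
    (hvadd : ∀ r r' : R, v (r + r') ≤ v r + v r')
    (hvmul : ∀ r r' : R, v (r * r') = v r * v r')
    (A P : Matrix (Fin n) (Fin n) R) (B : Matrix (Fin n) (Fin s) R)
    (C : Matrix (Fin s) (Fin n) R) (D : Matrix (Fin s) (Fin s) R) (a : R)
    (hP : P ≠ 0)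
    (hPA : P * A = a • (1 : Matrix (Fin n) (Fin n) R))
    (hM : IsSD v (Matrix.fromBlocks A B C D)) :
    IsSD v (a • D - C * P * B) := by
  classical
  have hv0' : v (0 : R) = 0 := (hv0 0).2 rfl
  set d : Fin n → ℝ := fun l => v (A l l) - ∑ k ∈ Finset.univ.erase l, v (A l k) with hd_def
  -- extract row conditions from hM
  have hA : ∀ l, (∑ k ∈ Finset.univ.erase l, v (A l k)) + ∑ j, v (B l j) < v (A l l) := by
    intro l
    have h := hM (Sum.inl l)
    rw [Finset.sum_erase_eq_sub (Finset.mem_univ _), Fintype.sum_sum_type] at h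
    simp only [Matrix.fromBlocks_apply₁₁, Matrix.fromBlocks_apply₁₂] at h
    have h2 : ∑ k, v (A l k) = v (A l l) + ∑ k ∈ Finset.univ.erase l, v (A l k) :=
      (Finset.add_sum_erase _ _ (Finset.mem_univ l)).symm
    linarith
  have hD : ∀ i, (∑ k, v (C i k)) + ∑ j ∈ Finset.univ.erase i, v (D i j) < v (D i i) := by
    intro i
    have h := hM (Sum.inr i)
    rw [Finset.sum_erase_eq_sub (Finset.mem_univ _), Fintype.sum_sum_type] at h
    simp only [Matrix.fromBlocks_apply₂₁, Matrix.fromBlocks_apply₂₂] at h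
    have h2 : ∑ j, v (D i j) = v (D i i) + ∑ j ∈ Finset.univ.erase i, v (D i j) :=
      (Finset.add_sum_erase _ _ (Finset.mem_univ i)).symm
    linarith
  have hbnn : ∀ l, (0:ℝ) ≤ ∑ j, v (B l j) := fun l => Finset.sum_nonneg fun j _ => hvnn _
  have hdpos : ∀ l, 0 < d l := fun l => by have := hA l; have := hbnn l; simp only [hd_def]; linarith
  have hbd : ∀ l, ∑ j, v (B l j) ≤ d l := fun l => by have := hA l; simp only [hd_def]; linarith
  -- positivity of v a
  have ha : 0 < v a := by
    obtain ⟨i0, l0, h0⟩ : ∃ i0 l0, P i0 l0 ≠ 0 := by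
      by_contra hc
      push_neg at hc
      exact hP (by ext i j; simpa using hc i j)
    have hz : ∀ k, ∑ l, P i0 l * A l k = a * (1 : Matrix (Fin n) (Fin n) R) i0 k := by
      intro k
      have := congrFun (congrFun hPA i0) k
      rwa [Matrix.mul_apply, Matrix.smul_apply, smul_eq_mul] at this
    have hk := my_key v hv0' hvnn hvadd hvmul A (fun l => P i0 l) _ hz
    have hrhs : ∑ k, v (a * (1 : Matrix (Fin n) (Fin n) R) i0 k) = v a := by
      rw [Finset.sum_eq_single i0]
      · rw [Matrix.one_apply_eq, mul_one]
      · intro k _ hk'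
        rw [Matrix.one_apply_ne' hk', mul_zero, hv0']
      · simp
    have hlhs : 0 < ∑ l, v (P i0 l) * d l := by
      apply Finset.sum_pos' (fun l _ => mul_nonneg (hvnn _) (hdpos l).le)
      refine ⟨l0, Finset.mem_univ _, mul_pos ?_ (hdpos l0)⟩
      exact lt_of_le_of_ne (hvnn _) fun h => h0 ((hv0 _).1 h.symm)
    rw [hrhs] at hk
    exact lt_of_lt_of_le hlhs hk
  -- main estimate
  intro i
  have hCPA : C * P * A = a • C := by
    rw [Matrix.mul_assoc, hPA, Matrix.mul_smul, Matrix.mul_one]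
  have hz2 : ∀ k, ∑ l, (C * P) i l * A l k = a * C i k := by
    intro k
    have := congrFun (congrFun hCPA i) k
    rwa [Matrix.mul_apply, Matrix.smul_apply, smul_eq_mul] at this
  have hk2 := my_key v hv0' hvnn hvadd hvmul A (fun l => (C * P) i l) _ hz2
  have hrhs2 : ∑ k, v (a * C i k) = v a * ∑ k, v (C i k) := by
    simp only [hvmul, Finset.mul_sum]
  rw [hrhs2] at hk2
  have h3 : ∑ j, v ((C * P * B) i j) ≤ ∑ l, v ((C * P) i l) * d l := by
    calc ∑ j, v ((C * P * B) i j) ≤ ∑ j, ∑ l, v ((C * P) i l * B l j) := by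
          apply Finset.sum_le_sum
          intro j _
          rw [Matrix.mul_apply]
          exact my_vsum v hv0' hvadd _ _
      _ = ∑ l, v ((C * P) i l) * ∑ j, v (B l j) := by
          rw [Finset.sum_comm]
          simp only [hvmul, Finset.mul_sum]
      _ ≤ ∑ l, v ((C * P) i l) * d l := by
          apply Finset.sum_le_sum
          intro l _
          exact mul_le_mul_of_nonneg_left (hbd l) (hvnn _)
  have hSapp : ∀ j, (a • D - C * P * B) i j = a * D i j - (C * P * B) i j := by
    intro j
    simp [Matrix.sub_apply, Matrix.smul_apply, smul_eq_mul]
  have hup : ∑ j ∈ Finset.univ.erase i, v ((a • D - C * P * B) i j)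
      ≤ v a * (∑ j ∈ Finset.univ.erase i, v (D i j)) + ∑ j ∈ Finset.univ.erase i, v ((C * P * B) i j) := by
    rw [Finset.mul_sum, ← Finset.sum_add_distrib]
    apply Finset.sum_le_sum
    intro j _
    rw [hSapp j, ← hvmul]
    exact my_vsub v hvnn hvadd hvmul _ _
  have herase : ∑ j ∈ Finset.univ.erase i, v ((C * P * B) i j)
      = ∑ j, v ((C * P * B) i j) - v ((C * P * B) i i) :=
    Finset.sum_erase_eq_sub (Finset.mem_univ _)
  have hdiag : v a * v (D i i) ≤ v ((a • D - C * P * B) i i) + v ((C * P * B) i i) := by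
    have he : a * D i i = (a • D - C * P * B) i i + (C * P * B) i i := by
      rw [hSapp i]; ring
    calc v a * v (D i i) = v (a * D i i) := (hvmul _ _).symm
      _ = v ((a • D - C * P * B) i i + (C * P * B) i i) := by rw [he]
      _ ≤ _ := hvadd _ _
  have hfin := mul_lt_mul_of_pos_left (hD i) ha
  rw [mul_add] at hfin
  linarith
end

section
/- Over a commutative ring with multiplicative absolute value, if a square matrix M is strictly doubly diagonally dominant, then M is regular (det M is nonzero and not a zero divisor). -/
/-- `X` is strictly doubly diagonally dominant w.r.t. the absolute value `v`. -/
def IsSDD {R : Type*} [CommRing R] {ι : Type*} [Fintype ι] [DecidableEq ι]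
    (v : R → ℝ) (X : Matrix ι ι R) : Prop :=
  ∀ i j, (∑ k ∈ Finset.univ.erase i, v (X i k)) * (∑ l ∈ Finset.univ.erase j, v (X j l)) <
    v (X i i * X j j)

lemma vsum_le {R : Type*} [CommRing R] (v : R → ℝ) (hv00 : v 0 = 0)
    (hvadd : ∀ r r' : R, v (r + r') ≤ v r + v r')
    {ι : Type*} (s : Finset ι) (f : ι → R) :
    v (∑ k ∈ s, f k) ≤ ∑ k ∈ s, v (f k) := by
  classical
  induction s using Finset.cons_induction with
  | empty => simp [hv00]
  | cons a s ha ih =>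
    rw [Finset.sum_cons, Finset.sum_cons]
    exact (hvadd _ _).trans (by linarith)

/-- A strictly doubly diagonally dominant matrix over a commutative ring with a
multiplicative absolute value is regular: its determinant is nonzero and not a zero divisor. -/
theorem stmt9 {R : Type*} [CommRing R] {N : ℕ} (hN : 0 < N) (v : R → ℝ)
    (hv0 : ∀ r : R, v r = 0 ↔ r = 0)
    (hvnn : ∀ r : R, 0 ≤ v r)
    (hvadd : ∀ r r' : R, v (r + r') ≤ v r + v r')
    (hvmul : ∀ r r' : R, v (r * r') = v r * v r')
    (M : Matrix (Fin N) (Fin N) R)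
    (hM : IsSDD v M) :
    M.det ≠ 0 ∧ ∀ r : R, M.det * r = 0 → r = 0 := by
  have hv00 : v 0 = 0 := (hv0 0).mpr rfl
  have hnt : (1 : R) ≠ 0 := by
    intro h
    have i0 : Fin N := ⟨0, hN⟩
    have hs : M i0 i0 * M i0 i0 = 0 := by
      calc M i0 i0 * M i0 i0 = M i0 i0 * M i0 i0 * 1 := (mul_one _).symm
      _ = 0 := by rw [h, mul_zero]
    have h2 := hM i0 i0
    rw [hs, hv00] at h2
    exact absurd h2 (not_lt.mpr (mul_nonneg (Finset.sum_nonneg fun k _ => hvnn _)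
      (Finset.sum_nonneg fun k _ => hvnn _)))
  haveI : Nontrivial R := nontrivial_of_ne 1 0 hnt
  haveI : NoZeroDivisors R := ⟨fun {a b} hab => by
    have h := hvmul a b
    rw [hab, hv00] at h
    rcases mul_eq_zero.mp h.symm with h | h
    · exact Or.inl ((hv0 a).mp h)
    · exact Or.inr ((hv0 b).mp h)⟩
  haveI : IsDomain R := NoZeroDivisors.to_isDomain R
  suffices hdet : M.det ≠ 0 by
    refine ⟨hdet, fun r hr => ?_⟩
    rcases mul_eq_zero.mp hr with h | h
    · exact absurd h hdet
    · exact h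
  intro hdet
  obtain ⟨x, hx, hMx⟩ := Matrix.exists_mulVec_eq_zero_iff.mpr hdet
  -- v of negation
  have hv1 : v 1 = 1 := by
    have h := hvmul 1 1
    rw [mul_one] at h
    have h1 : v 1 ≠ 0 := fun h0 => hnt ((hv0 1).mp h0)
    rcases mul_eq_zero.mp (show v 1 * (v 1 - 1) = 0 by linear_combination -h) with h2 | h2
    · exact absurd h2 h1
    · linarith
  have hvneg : ∀ r : R, v (-r) = v r := by
    intro r
    have h : v (-1 : R) = 1 := by
      have h := hvmul (-1) (-1)
      rw [neg_mul_neg, one_mul, hv1] at h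
      rcases mul_eq_zero.mp (show (v (-1:R) - 1) * (v (-1:R) + 1) = 0 by linear_combination -h) with h2 | h2
      · linarith
      · linarith [hvnn (-1 : R)]
    calc v (-r) = v ((-1) * r) := by rw [neg_one_mul]
    _ = v r := by rw [hvmul, h, one_mul]
  -- rows of the kernel equation
  have hrow : ∀ p : Fin N, M p p * x p = -∑ k ∈ Finset.univ.erase p, M p k * x k := by
    intro p
    have h : ∑ k, M p k * x k = 0 := by
      have := congrFun hMx p
      simpa [Matrix.mulVec, dotProduct] using this
    rw [← Finset.add_sum_erase _ _ (Finset.mem_univ p)] at h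
    exact eq_neg_of_add_eq_zero_left h
  -- key row estimate
  have claim : ∀ p q : Fin N, (∀ k ∈ Finset.univ.erase p, v (x k) ≤ v (x q)) →
      v (M p p) * v (x p) ≤ (∑ k ∈ Finset.univ.erase p, v (M p k)) * v (x q) := by
    intro p q hq
    have h1 : v (M p p * x p) ≤ ∑ k ∈ Finset.univ.erase p, v (M p k * x k) := by
      rw [hrow p, hvneg]
      exact vsum_le v hv00 hvadd _ _
    rw [hvmul] at h1
    calc v (M p p) * v (x p)
        ≤ ∑ k ∈ Finset.univ.erase p, v (M p k) * v (x k) :=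
          h1.trans (le_of_eq (Finset.sum_congr rfl fun k _ => hvmul _ _))
      _ ≤ ∑ k ∈ Finset.univ.erase p, v (M p k) * v (x q) :=
          Finset.sum_le_sum fun k hk => mul_le_mul_of_nonneg_left (hq k hk) (hvnn _)
      _ = (∑ k ∈ Finset.univ.erase p, v (M p k)) * v (x q) := (Finset.sum_mul _ _ _).symm
  -- choose i maximizing v ∘ x
  obtain ⟨i, -, hi⟩ := Finset.exists_max_image Finset.univ (fun k => v (x k))
    ⟨⟨0, hN⟩, Finset.mem_univ _⟩
  have hxi : x i ≠ 0 := by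
    intro h0
    apply hx
    funext k
    have hk := hi k (Finset.mem_univ k)
    rw [h0, hv00] at hk
    exact (hv0 (x k)).mp (le_antisymm hk (hvnn _))
  by_cases hcase : ∀ k ∈ Finset.univ.erase i, x k = 0
  · have h0 : M i i * x i = 0 := by
      rw [hrow i, neg_eq_zero]
      exact Finset.sum_eq_zero fun k hk => by rw [hcase k hk, mul_zero]
    have hMii : M i i = 0 := (mul_eq_zero.mp h0).resolve_right hxi
    have h2 := hM i i
    rw [hMii, zero_mul, hv00] at h2
    exact absurd h2 (not_lt.mpr (mul_nonneg (Finset.sum_nonneg fun k _ => hvnn _)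
      (Finset.sum_nonneg fun k _ => hvnn _)))
  · push_neg at hcase
    obtain ⟨k0, hk0mem, hk0⟩ := hcase
    obtain ⟨j, hjmem, hj⟩ := Finset.exists_max_image (Finset.univ.erase i)
      (fun k => v (x k)) ⟨k0, hk0mem⟩
    have hxj : 0 < v (x j) :=
      lt_of_lt_of_le (lt_of_le_of_ne (hvnn _) fun h => hk0 ((hv0 _).mp h.symm)) (hj k0 hk0mem)
    have hxi' : 0 < v (x i) := lt_of_lt_of_le hxj (hi j (Finset.mem_univ j))
    have c1 := claim i j hj
    have c2 := claim j i fun l _ => hi l (Finset.mem_univ l)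
    have hij := hM i j
    rw [hvmul] at hij
    have hmul : (v (M i i) * v (x i)) * (v (M j j) * v (x j)) ≤
        ((∑ k ∈ Finset.univ.erase i, v (M i k)) * v (x j)) *
          ((∑ l ∈ Finset.univ.erase j, v (M j l)) * v (x i)) :=
      mul_le_mul c1 c2 (mul_nonneg (hvnn _) (hvnn _))
        (mul_nonneg (Finset.sum_nonneg fun k _ => hvnn _) (hvnn _))
    have ht : 0 < v (x i) * v (x j) := mul_pos hxi' hxj
    have key : (v (M i i) * v (M j j)) * (v (x i) * v (x j)) ≤
        ((∑ k ∈ Finset.univ.erase i, v (M i k)) *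
          (∑ l ∈ Finset.univ.erase j, v (M j l))) * (v (x i) * v (x j)) := by
      calc (v (M i i) * v (M j j)) * (v (x i) * v (x j))
          = (v (M i i) * v (x i)) * (v (M j j) * v (x j)) := by ring
        _ ≤ _ := hmul
        _ = _ := by ring
    exact absurd (le_of_mul_le_mul_right key ht) (not_le.mpr hij)
end

section
/- Let M = [[A, B], [C, D]] over a commutative ring R, X, Y ∈ R^{n×n} both regular, f ∈ R, à = f·I_n - X·A·Y, and a(x) ∈ R[x] nonzero with a(Ã) = 0. Set P = Y · p(f, Ã; a) · X and S = a(f)·D - C·P·B. Then a(f)^s · det(M) = det(A) · det(S). -/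
/-- An element of a commutative ring is regular if it is nonzero and not a zero divisor. -/
def IsRegularElem {R : Type*} [CommRing R] (r : R) : Prop :=
  r ≠ 0 ∧ ∀ s : R, r * s = 0 → s = 0

/-- Theorem (basic): with `Ã = f·I - X·A·Y` annihilated by `a`, `X, Y` regular,
`P = Y·p(f, Ã; a)·X` and `S = a(f)·D - C·P·B`, we get
`a(f)^s · det M = det A · det S`. -/
theorem stmt13 {R : Type*} [CommRing R] {n s : ℕ} (d : ℕ) (a : ℕ → R) (f : R)
    (A X Y : Matrix (Fin n) (Fin n) R) (B : Matrix (Fin n) (Fin s) R)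
    (C : Matrix (Fin s) (Fin n) R) (D : Matrix (Fin s) (Fin s) R)
    (hX : IsRegularElem X.det) (hY : IsRegularElem Y.det)
    (hane : ∃ k, k ≤ d ∧ a k ≠ 0)
    (hann : ∑ k ∈ Finset.range (d + 1),
        a k • (f • (1 : Matrix (Fin n) (Fin n) R) - X * A * Y) ^ k = 0) :
    (∑ k ∈ Finset.range (d + 1), a k * f ^ k) ^ s * (Matrix.fromBlocks A B C D).det =
      A.det *
        ((∑ k ∈ Finset.range (d + 1), a k * f ^ k) • D -
          C * (Y * (∑ k ∈ Finset.range (d + 1),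
              a k • ∑ i ∈ Finset.range k,
                f ^ i • (f • (1 : Matrix (Fin n) (Fin n) R) - X * A * Y) ^ (k - 1 - i)) * X)
            * B).det := by
  set Atil : Matrix (Fin n) (Fin n) R := f • 1 - X * A * Y with hAtil
  set α : R := ∑ k ∈ Finset.range (d + 1), a k * f ^ k with hα
  set p : Matrix (Fin n) (Fin n) R :=
    ∑ k ∈ Finset.range (d + 1), a k • ∑ i ∈ Finset.range k, f ^ i • Atil ^ (k - 1 - i) with hp
  set P : Matrix (Fin n) (Fin n) R := Y * p * X with hP
  -- key algebraic identity: p * (X*A*Y) = α • 1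
  have hcomm : Commute (f • (1 : Matrix (Fin n) (Fin n) R)) Atil := (Commute.one_left Atil).smul_left f
  have hgeom : ∀ k : ℕ,
      (∑ i ∈ Finset.range k, f ^ i • Atil ^ (k - 1 - i)) * (X * A * Y)
        = f ^ k • 1 - Atil ^ k := by
    intro k
    have h1 : X * A * Y = f • (1 : Matrix (Fin n) (Fin n) R) - Atil := by
      rw [hAtil, sub_sub_cancel]
    have h2 := hcomm.geom_sum₂_mul k
    calc (∑ i ∈ Finset.range k, f ^ i • Atil ^ (k - 1 - i)) * (X * A * Y)
        = (∑ i ∈ Finset.range k, (f • (1 : Matrix (Fin n) (Fin n) R)) ^ i * Atil ^ (k - 1 - i))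
            * (f • (1 : Matrix (Fin n) (Fin n) R) - Atil) := by
          rw [h1]
          congr 1
          refine Finset.sum_congr rfl fun i _ => ?_
          rw [smul_pow, smul_mul_assoc, one_pow, one_mul]
      _ = (f • (1 : Matrix (Fin n) (Fin n) R)) ^ k - Atil ^ k := h2
      _ = f ^ k • 1 - Atil ^ k := by rw [smul_pow, one_pow]
  have hkey : p * (X * A * Y) = α • (1 : Matrix (Fin n) (Fin n) R) := by
    rw [hp, Finset.sum_mul]
    have : ∀ k ∈ Finset.range (d + 1),
        (a k • ∑ i ∈ Finset.range k, f ^ i • Atil ^ (k - 1 - i)) * (X * A * Y)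
          = a k • (f ^ k • (1 : Matrix (Fin n) (Fin n) R)) - a k • Atil ^ k := by
      intro k _
      rw [smul_mul_assoc, hgeom k, smul_sub]
    rw [Finset.sum_congr rfl this, Finset.sum_sub_distrib, hann, sub_zero, hα,
      Finset.sum_smul]
    refine Finset.sum_congr rfl fun k _ => ?_
    rw [smul_smul]
  -- cancel Y on the right using regularity of det Y
  have cancelY : ∀ M N : Matrix (Fin n) (Fin n) R, M * Y = N * Y → M = N := by
    intro M N h
    have h2 : M * Y * Y.adjugate = N * Y * Y.adjugate := by rw [h]
    rw [Matrix.mul_assoc, Matrix.mul_assoc, Matrix.mul_adjugate, Matrix.mul_smul,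
      Matrix.mul_smul, Matrix.mul_one, Matrix.mul_one] at h2
    ext i j
    have h4 : Y.det * M i j = Y.det * N i j := by
      have := congrFun (congrFun h2 i) j
      simpa [Matrix.smul_apply, smul_eq_mul] using this
    have h3 : Y.det * (M i j - N i j) = 0 := by rw [mul_sub, h4, sub_self]
    exact sub_eq_zero.mp (hY.2 _ h3)
  have hPA : P * A = α • (1 : Matrix (Fin n) (Fin n) R) := by
    apply cancelY
    calc P * A * Y = Y * (p * (X * A * Y)) := by rw [hP]; noncomm_ring
      _ = Y * (α • 1) := by rw [hkey]
      _ = α • Y := by rw [Matrix.mul_smul, Matrix.mul_one]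
      _ = (α • 1) * Y := by rw [Matrix.smul_mul, Matrix.one_mul]
  -- block factorization
  set M : Matrix (Fin n ⊕ Fin s) (Fin n ⊕ Fin s) R := Matrix.fromBlocks A B C D with hM
  set L : Matrix (Fin n ⊕ Fin s) (Fin n ⊕ Fin s) R :=
    Matrix.fromBlocks 1 0 (-(C * P)) (α • 1) with hL
  have hLM : L * M = Matrix.fromBlocks A B 0 (α • D - C * P * B) := by
    rw [hL, hM, Matrix.fromBlocks_multiply]
    have e11 : (1 : Matrix (Fin n) (Fin n) R) * A + (0 : Matrix (Fin n) (Fin s) R) * C = A := by simp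
    have e12 : (1 : Matrix (Fin n) (Fin n) R) * B + (0 : Matrix (Fin n) (Fin s) R) * D = B := by simp
    have e21 : -(C * P) * A + (α • (1 : Matrix (Fin s) (Fin s) R)) * C = 0 := by
      rw [Matrix.smul_mul, Matrix.one_mul, Matrix.neg_mul, Matrix.mul_assoc, hPA,
        Matrix.mul_smul, Matrix.mul_one, neg_add_cancel]
    have e22 : -(C * P) * B + (α • (1 : Matrix (Fin s) (Fin s) R)) * D
        = α • D - C * P * B := by
      rw [Matrix.smul_mul, Matrix.one_mul, Matrix.neg_mul, neg_add_eq_sub]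
    rw [e11, e12, e21, e22]
  have hdetL : L.det = α ^ s := by
    rw [hL, Matrix.det_fromBlocks_zero₁₂, Matrix.det_one, one_mul, Matrix.det_smul,
      Matrix.det_one, mul_one, Fintype.card_fin]
  have := congrArg Matrix.det hLM
  rw [Matrix.det_mul, hdetL, Matrix.det_fromBlocks_zero₂₁] at this
  exact this
end

section
/- Let M = [[A, B], [C, D]] over a commutative ring R, f ∈ R, X ∈ R^{N×N} (N = n+s), M̃ = f·I_N - X·M, and m(x) ∈ R[x] a nonzero annihilating polynomial of M̃. Partition p(f·I, M̃; m)·X conformally to M and let K be its lower-right s×s block. Then m(f)^s · det(A) = det(M) · det(K). -/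
/-- Theorem (complementary): with `M̃ = f·I_N - X·M` annihilated by `m(x)`, and `K` the
lower-right `s×s` block of `p(f·I, M̃; m)·X`, we get `m(f)^s · det A = det M · det K`. -/
theorem stmt14 {R : Type*} [CommRing R] {n s : ℕ} (d : ℕ) (m : ℕ → R) (f : R)
    (A : Matrix (Fin n) (Fin n) R) (B : Matrix (Fin n) (Fin s) R)
    (C : Matrix (Fin s) (Fin n) R) (D : Matrix (Fin s) (Fin s) R)
    (X : Matrix (Fin n ⊕ Fin s) (Fin n ⊕ Fin s) R)
    (hmne : ∃ k, k ≤ d ∧ m k ≠ 0)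
    (hann : ∑ k ∈ Finset.range (d + 1),
        m k • (f • (1 : Matrix (Fin n ⊕ Fin s) (Fin n ⊕ Fin s) R)
          - X * Matrix.fromBlocks A B C D) ^ k = 0) :
    (∑ k ∈ Finset.range (d + 1), m k * f ^ k) ^ s * A.det =
      (Matrix.fromBlocks A B C D).det *
        (Matrix.toBlocks₂₂
          ((∑ k ∈ Finset.range (d + 1),
            m k • ∑ i ∈ Finset.range k,
              f ^ i • (f • (1 : Matrix (Fin n ⊕ Fin s) (Fin n ⊕ Fin s) R)
                - X * Matrix.fromBlocks A B C D) ^ (k - 1 - i)) * X)).det := by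
  classical
  set M := Matrix.fromBlocks A B C D with hM
  set Mt := f • (1 : Matrix (Fin n ⊕ Fin s) (Fin n ⊕ Fin s) R) - X * M with hMt
  set c := ∑ k ∈ Finset.range (d + 1), m k * f ^ k with hc
  set P := ∑ k ∈ Finset.range (d + 1),
      m k • ∑ i ∈ Finset.range k, f ^ i • Mt ^ (k - 1 - i) with hP
  have key : ∀ k : ℕ, (∑ i ∈ Finset.range k, f ^ i • Mt ^ (k - 1 - i)) * (f • 1 - Mt)
      = f ^ k • 1 - Mt ^ k := by
    intro k
    have hcomm : Commute (f • (1 : Matrix (Fin n ⊕ Fin s) (Fin n ⊕ Fin s) R)) Mt :=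
      (Commute.one_left Mt).smul_left f
    have := hcomm.geom_sum₂_mul k
    simpa [smul_pow, smul_mul_assoc] using this
  have hXM : X * M = f • 1 - Mt := by rw [hMt, sub_sub_cancel]
  have hQM : P * (X * M) = c • (1 : Matrix (Fin n ⊕ Fin s) (Fin n ⊕ Fin s) R) := by
    rw [hXM, hP, Finset.sum_mul]
    have : ∀ k ∈ Finset.range (d + 1),
        (m k • ∑ i ∈ Finset.range k, f ^ i • Mt ^ (k - 1 - i)) * (f • 1 - Mt)
          = (m k * f ^ k) • 1 - m k • Mt ^ k := by
      intro k _
      rw [smul_mul_assoc, key k, smul_sub, smul_smul]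
    rw [Finset.sum_congr rfl this, Finset.sum_sub_distrib, hann, sub_zero, hc,
      Finset.sum_smul]
  set Q := P * X with hQ
  have hQM' : Q * M = c • 1 := by rw [hQ, mul_assoc, hQM]
  have hone : (c • (1 : Matrix (Fin n ⊕ Fin s) (Fin n ⊕ Fin s) R))
      = Matrix.fromBlocks (c • 1) 0 0 (c • 1) := by
    rw [← Matrix.fromBlocks_one, Matrix.fromBlocks_smul, smul_zero, smul_zero]
  have h21 : Q.toBlocks₂₁ * A + Q.toBlocks₂₂ * C = 0 := by
    have := congrArg Matrix.toBlocks₂₁ hQM'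
    rw [← Matrix.fromBlocks_toBlocks Q, hM, Matrix.fromBlocks_multiply, hone] at this
    simpa using this
  have h22 : Q.toBlocks₂₁ * B + Q.toBlocks₂₂ * D = c • 1 := by
    have := congrArg Matrix.toBlocks₂₂ hQM'
    rw [← Matrix.fromBlocks_toBlocks Q, hM, Matrix.fromBlocks_multiply, hone] at this
    simpa using this
  have hL : Matrix.fromBlocks 1 0 Q.toBlocks₂₁ Q.toBlocks₂₂ * M
      = Matrix.fromBlocks A B 0 (c • 1) := by
    rw [hM, Matrix.fromBlocks_multiply]
    simp [h21, h22]
  have hdet := congrArg Matrix.det hL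
  rw [Matrix.det_mul, Matrix.det_fromBlocks_zero₁₂, Matrix.det_fromBlocks_zero₂₁,
    Matrix.det_one, one_mul, Matrix.det_smul, Matrix.det_one, Fintype.card_fin,
    mul_one] at hdet
  calc c ^ s * A.det = Q.toBlocks₂₂.det * M.det := by rw [hdet]; ring
    _ = M.det * Q.toBlocks₂₂.det := mul_comm _ _
end

section
/- Let M = [[A, B], [C, D]] over a commutative ring R acting on an R-module L, with A·P = P·A = a(f)·I_n where P = Y·p(f, f·I - X·A·Y; a)·X as in the Schur-like setup, and S = a(f)·D - C·P·B. If v₀ ∈ L^n satisfies A·v₀ = 0 and C·v₀ = 0, and w ∈ L^s satisfies S·w = 0, then u = ( -P·B·w + v₀ , a(f)·w ) satisfies M·u = 0. -/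
def matVecSMul {R : Type*} [CommRing R] {L : Type*} [AddCommGroup L] [Module R L]
    {ι κ : Type*} [Fintype κ] (Z : Matrix ι κ R) (y : κ → L) : ι → L :=
  fun i => ∑ j, Z i j • y j

section helpers
variable {R : Type*} [CommRing R] {L : Type*} [AddCommGroup L] [Module R L]

lemma mv_mul {ι κ μ : Type*} [Fintype κ] [Fintype μ] (Z : Matrix ι κ R)
    (W : Matrix κ μ R) (y : μ → L) :
    matVecSMul (Z * W) y = matVecSMul Z (matVecSMul W y) := by
  funext i
  simp only [matVecSMul, Matrix.mul_apply, Finset.sum_smul, Finset.smul_sum, mul_smul]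
  rw [Finset.sum_comm]

lemma mv_add {ι κ : Type*} [Fintype κ] (Z : Matrix ι κ R) (y z : κ → L) :
    matVecSMul Z (y + z) = matVecSMul Z y + matVecSMul Z z := by
  funext i; simp [matVecSMul, smul_add, Finset.sum_add_distrib]

lemma mv_sub_mat {ι κ : Type*} [Fintype κ] (Z W : Matrix ι κ R) (y : κ → L) :
    matVecSMul (Z - W) y = matVecSMul Z y - matVecSMul W y := by
  funext i; simp [matVecSMul, sub_smul, Finset.sum_sub_distrib]

lemma mv_smul_mat {ι κ : Type*} [Fintype κ] (c : R) (Z : Matrix ι κ R) (y : κ → L) :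
    matVecSMul (c • Z) y = fun i => c • matVecSMul Z y i := by
  funext i; simp [matVecSMul, mul_smul, Finset.smul_sum]

lemma mv_one {κ : Type*} [Fintype κ] [DecidableEq κ] (y : κ → L) :
    matVecSMul (1 : Matrix κ κ R) y = y := by
  funext i; simp [matVecSMul, Matrix.one_apply]

end helpers

/-- Kernel lemma: if `A·P = P·A = a(f)·I` with `P = Y·p(f, f·I − X·A·Y; a)·X`,
`S = a(f)·D − C·P·B`, `A·v₀ = 0`, `C·v₀ = 0` and `S·w = 0`, then
`u = (−P·B·w + v₀, a(f)·w)` lies in the kernel of `M = [[A,B],[C,D]]`. -/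
theorem stmt15 {R : Type*} [CommRing R] {L : Type*} [AddCommGroup L] [Module R L]
    {n s : ℕ} (d : ℕ) (a : ℕ → R) (f : R)
    (A X Y : Matrix (Fin n) (Fin n) R) (B : Matrix (Fin n) (Fin s) R)
    (C : Matrix (Fin s) (Fin n) R) (D : Matrix (Fin s) (Fin s) R)
    (P : Matrix (Fin n) (Fin n) R)
    (hP : P = Y * (∑ k ∈ Finset.range (d + 1),
        a k • ∑ i ∈ Finset.range k,
          f ^ i • (f • (1 : Matrix (Fin n) (Fin n) R) - X * A * Y) ^ (k - 1 - i)) * X)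
    (hAP : A * P =
      (∑ k ∈ Finset.range (d + 1), a k * f ^ k) • (1 : Matrix (Fin n) (Fin n) R))
    (hPA : P * A =
      (∑ k ∈ Finset.range (d + 1), a k * f ^ k) • (1 : Matrix (Fin n) (Fin n) R))
    (v₀ : Fin n → L) (w : Fin s → L)
    (hv₀A : matVecSMul A v₀ = 0) (hv₀C : matVecSMul C v₀ = 0)
    (hw : matVecSMul ((∑ k ∈ Finset.range (d + 1), a k * f ^ k) • D - C * P * B) w = 0) :
    matVecSMul (Matrix.fromBlocks A B C D)
      (Sum.elim (fun i => -(matVecSMul (P * B) w) i + v₀ i)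
        (fun j => (∑ k ∈ Finset.range (d + 1), a k * f ^ k) • w j)) = 0 := by
  set α := ∑ k ∈ Finset.range (d + 1), a k * f ^ k with hα
  funext x
  cases x with
  | inl i =>
    have h1 : matVecSMul A (fun i => -(matVecSMul (P * B) w) i + v₀ i)
        = -(matVecSMul (A * (P * B)) w) := by
      have := mv_add A (fun i => -(matVecSMul (P * B) w) i) v₀
      have hneg : matVecSMul A (fun i => -(matVecSMul (P * B) w) i)
          = -(matVecSMul A (matVecSMul (P * B) w)) := by
        funext i; simp [matVecSMul, smul_neg, Finset.sum_neg_distrib]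
      calc matVecSMul A (fun i => -(matVecSMul (P * B) w) i + v₀ i)
          = matVecSMul A (fun i => -(matVecSMul (P * B) w) i) + matVecSMul A v₀ := this
        _ = -(matVecSMul A (matVecSMul (P * B) w)) := by rw [hneg, hv₀A, add_zero]
        _ = -(matVecSMul (A * (P * B)) w) := (congrArg Neg.neg (mv_mul A (P * B) w)).symm
    have h2 : A * (P * B) = α • B := by
      rw [← Matrix.mul_assoc, hAP, Matrix.smul_mul, Matrix.one_mul]
    simp only [matVecSMul, Matrix.fromBlocks, Fintype.sum_sum_type, Matrix.of_apply,
      Sum.elim_inl, Sum.elim_inr, Pi.zero_apply]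
    have h1' := congrFun h1 i
    simp only [matVecSMul] at h1'
    rw [h1', h2]
    have hsm : ∀ k, B i k • α • w k = (α • B) i k • w k := by
      intro k; rw [Matrix.smul_apply, smul_eq_mul, mul_smul]; exact smul_comm _ _ _
    simp only [hsm]
    simp [matVecSMul]
  | inr j =>
    have h1 : matVecSMul C (fun i => -(matVecSMul (P * B) w) i + v₀ i)
        = -(matVecSMul (C * (P * B)) w) := by
      have hneg : matVecSMul C (fun i => -(matVecSMul (P * B) w) i)
          = -(matVecSMul C (matVecSMul (P * B) w)) := by
        funext i; simp [matVecSMul, smul_neg, Finset.sum_neg_distrib]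
      calc matVecSMul C (fun i => -(matVecSMul (P * B) w) i + v₀ i)
          = matVecSMul C (fun i => -(matVecSMul (P * B) w) i) + matVecSMul C v₀ :=
            mv_add C _ v₀
        _ = -(matVecSMul C (matVecSMul (P * B) w)) := by rw [hneg, hv₀C, add_zero]
        _ = -(matVecSMul (C * (P * B)) w) := (congrArg Neg.neg (mv_mul C (P * B) w)).symm
    have hw' : matVecSMul (α • D) w = matVecSMul (C * P * B) w := by
      have h := mv_sub_mat (α • D) (C * P * B) w
      rw [hw] at h
      exact sub_eq_zero.mp h.symm
    have hassoc : matVecSMul (C * P * B) w = matVecSMul (C * (P * B)) w := by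
      rw [Matrix.mul_assoc]
    simp only [matVecSMul, Matrix.fromBlocks, Fintype.sum_sum_type, Matrix.of_apply,
      Sum.elim_inl, Sum.elim_inr, Pi.zero_apply]
    have h1' := congrFun h1 j
    have hw'' := congrFun (hw'.trans hassoc) j
    simp only [matVecSMul, Matrix.smul_apply, smul_eq_mul, mul_smul] at h1' hw'' ⊢
    have : ∀ k, D j k • α • w k = α • D j k • w k := fun k => smul_comm _ _ _
    simp only [this]
    rw [h1', hw'']
    simp [matVecSMul]
end

section
/- Let M be a complex (n+s)×(n+s) matrix with principal n×n submatrix A, B, C, D the remaining blocks, and let a(x) be a monic complex polynomial of degree d > 0 with a(A) = 0. Define S(λ) = a(λ)·(λ·I_s - D) - C · p(λ·I, A; a) · B. Then for every λ ∈ ℂ, a(λ)^s · det(λ·I_{n+s} - M) = det(λ·I_n - A) · det(S(λ)). -/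
open Matrix Polynomial Finset

theorem XP {n : ℕ} (d : ℕ) (a : ℕ → ℂ) (A : Matrix (Fin n) (Fin n) ℂ)
    (hann : ∑ k ∈ Finset.range (d + 1), a k • A ^ k = 0) (l : ℂ) :
    (l • (1 : Matrix (Fin n) (Fin n) ℂ) - A) *
      (∑ k ∈ Finset.range (d + 1), a k • ∑ i ∈ Finset.range k, l ^ i • A ^ (k - 1 - i)) =
      (∑ k ∈ Finset.range (d + 1), a k * l ^ k) • 1 := by
  have key : ∀ k, (l • (1 : Matrix (Fin n) (Fin n) ℂ) - A) *
      (∑ i ∈ Finset.range k, l ^ i • A ^ (k - 1 - i)) = l ^ k • 1 - A ^ k := by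
    intro k
    have step : ∀ i ∈ Finset.range k,
        (l • (1 : Matrix (Fin n) (Fin n) ℂ) - A) * (l ^ i • A ^ (k - 1 - i))
          = (fun i => l ^ i • A ^ (k - i)) (i+1) - (fun i => l ^ i • A ^ (k - i)) i := by
      intro i hi
      have hik := Finset.mem_range.mp hi
      have h1 : k - 1 - i = k - (i+1) := by omega
      have h2 : k - (i+1) + 1 = k - i := by omega
      show _ = l ^ (i+1) • A ^ (k - (i+1)) - l ^ i • A ^ (k - i)
      rw [h1, ← h2, sub_mul, Matrix.smul_mul, Matrix.one_mul, Matrix.mul_smul, smul_smul,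
        ← pow_succ', ← pow_succ']
    have tel := Finset.sum_range_sub (fun i => l ^ i • A ^ (k - i)) k
    rw [Finset.mul_sum, Finset.sum_congr rfl step, tel]
    simp
  rw [Finset.mul_sum]
  simp only [Matrix.mul_smul, key]
  rw [← sub_zero ((∑ k ∈ Finset.range (d + 1), a k * l ^ k) • (1:Matrix (Fin n) (Fin n) ℂ)), ← hann]
  rw [Finset.sum_smul, ← Finset.sum_sub_distrib]
  congr 1; ext k
  rw [smul_sub, smul_smul]


/-- For `M = [[A,B],[C,D]]` complex, a monic polynomial `a` of degree `d > 0` annihilating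
`A`, and `S(λ) = a(λ)·(λI − D) − C·p(λI, A; a)·B`, we have
`a(λ)^s · det(λI − M) = det(λI − A) · det(S(λ))` for all `λ ∈ ℂ`. -/
theorem stmt16 {n s : ℕ} (d : ℕ) (hd : 0 < d) (a : ℕ → ℂ) (hmonic : a d = 1)
    (A : Matrix (Fin n) (Fin n) ℂ) (B : Matrix (Fin n) (Fin s) ℂ)
    (C : Matrix (Fin s) (Fin n) ℂ) (D : Matrix (Fin s) (Fin s) ℂ)
    (hann : ∑ k ∈ Finset.range (d + 1), a k • A ^ k = 0) :
    ∀ l : ℂ,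
      (∑ k ∈ Finset.range (d + 1), a k * l ^ k) ^ s *
          (l • (1 : Matrix (Fin n ⊕ Fin s) (Fin n ⊕ Fin s) ℂ)
            - Matrix.fromBlocks A B C D).det =
        (l • (1 : Matrix (Fin n) (Fin n) ℂ) - A).det *
          ((∑ k ∈ Finset.range (d + 1), a k * l ^ k) •
              (l • (1 : Matrix (Fin s) (Fin s) ℂ) - D) -
            C * (∑ k ∈ Finset.range (d + 1),
              a k • ∑ i ∈ Finset.range k, l ^ i • A ^ (k - 1 - i)) * B).det := by
  -- define the two sides as functions of l
  set F : ℂ → ℂ := fun l =>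
      (∑ k ∈ Finset.range (d + 1), a k * l ^ k) ^ s *
          (l • (1 : Matrix (Fin n ⊕ Fin s) (Fin n ⊕ Fin s) ℂ)
            - Matrix.fromBlocks A B C D).det with hF
  set G : ℂ → ℂ := fun l =>
        (l • (1 : Matrix (Fin n) (Fin n) ℂ) - A).det *
          ((∑ k ∈ Finset.range (d + 1), a k * l ^ k) •
              (l • (1 : Matrix (Fin s) (Fin s) ℂ) - D) -
            C * (∑ k ∈ Finset.range (d + 1),
              a k • ∑ i ∈ Finset.range k, l ^ i • A ^ (k - 1 - i)) * B).det with hG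
  suffices h : F = G by intro l; exact congrFun h l
  -- the polynomial a
  set q : Polynomial ℂ := ∑ k ∈ Finset.range (d + 1), Polynomial.C (a k) * Polynomial.X ^ k with hq
  have hqeval : ∀ l : ℂ, q.eval l = ∑ k ∈ Finset.range (d + 1), a k * l ^ k := by
    intro l; simp [hq, Polynomial.eval_finset_sum]
  have hqcoeff : q.coeff d = 1 := by
    rw [hq, Polynomial.finset_sum_coeff]
    simp only [Polynomial.coeff_C_mul, Polynomial.coeff_X_pow]
    rw [Finset.sum_eq_single d]
    · simp [hmonic]
    · intro b _ hb; simp [Ne.symm hb]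
    · intro h; exact absurd (Finset.self_mem_range_succ d) h
  have hq0 : q ≠ 0 := fun h => by simp [h] at hqcoeff
  have hfin : {x : ℂ | q.IsRoot x}.Finite := Polynomial.finite_setOf_isRoot hq0
  have hdense : Dense {x : ℂ | q.IsRoot x}ᶜ := Set.Countable.dense_compl ℂ hfin.countable
  -- continuity
  have hFc : Continuous F := by
    apply Continuous.mul
    · exact (continuous_finset_sum _ fun k _ => continuous_const.mul (continuous_pow k)).pow s
    · exact Continuous.matrix_det ((continuous_id.smul continuous_const).sub continuous_const)
  have hGc : Continuous G := by
    apply Continuous.mul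
    · exact Continuous.matrix_det ((continuous_id.smul continuous_const).sub continuous_const)
    · apply Continuous.matrix_det
      apply Continuous.sub
      · exact (continuous_finset_sum _ fun k _ => continuous_const.mul (continuous_pow k)).smul
          ((continuous_id.smul continuous_const).sub continuous_const)
      · exact (Continuous.matrix_mul (Continuous.matrix_mul continuous_const
          (continuous_finset_sum _ fun k _ => by fun_prop))
          continuous_const)
  refine hFc.ext_on hdense hGc ?_
  intro l hl
  have hal : (∑ k ∈ Finset.range (d + 1), a k * l ^ k) ≠ 0 := by
    rw [← hqeval]; exact hl
  set al := ∑ k ∈ Finset.range (d + 1), a k * l ^ k with hal'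
  set X := l • (1 : Matrix (Fin n) (Fin n) ℂ) - A with hX
  set P := ∑ k ∈ Finset.range (d + 1), a k • ∑ i ∈ Finset.range k, l ^ i • A ^ (k - 1 - i) with hP
  have hXP : X * P = al • 1 := XP d a A hann l
  have hdet : X.det * P.det = al ^ n := by
    rw [← Matrix.det_mul, hXP, Matrix.det_smul, Matrix.det_one, mul_one]
    simp
  have hXu : IsUnit X.det := by
    rw [isUnit_iff_ne_zero]
    intro h
    rw [h, zero_mul] at hdet
    exact pow_ne_zero n hal hdet.symm
  haveI : Invertible X := X.invertibleOfIsUnitDet hXu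
  have hPinv : P = al • X⁻¹ := by
    have := congrArg (fun M => X⁻¹ * M) hXP
    simpa [← Matrix.mul_assoc, Matrix.nonsing_inv_mul X hXu, Matrix.mul_smul,
      Matrix.mul_one] using this
  -- block decomposition
  have hblock : l • (1 : Matrix (Fin n ⊕ Fin s) (Fin n ⊕ Fin s) ℂ) - Matrix.fromBlocks A B C D
      = Matrix.fromBlocks X (-B) (-C) (l • (1 : Matrix (Fin s) (Fin s) ℂ) - D) := by
    rw [← Matrix.fromBlocks_one, Matrix.fromBlocks_smul, sub_eq_add_neg, Matrix.fromBlocks_neg,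
      Matrix.fromBlocks_add, hX]
    congr 1 <;> simp [sub_eq_add_neg]
  have hdetblock : (l • (1 : Matrix (Fin n ⊕ Fin s) (Fin n ⊕ Fin s) ℂ)
        - Matrix.fromBlocks A B C D).det
      = X.det * ((l • (1 : Matrix (Fin s) (Fin s) ℂ) - D) - C * X⁻¹ * B).det := by
    rw [hblock, Matrix.det_fromBlocks₁₁, Matrix.invOf_eq_nonsing_inv]
    congr 2
    simp [Matrix.neg_mul, Matrix.mul_neg]
  -- Schur side
  have hS : al • (l • (1 : Matrix (Fin s) (Fin s) ℂ) - D) - C * P * B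
      = al • ((l • (1 : Matrix (Fin s) (Fin s) ℂ) - D) - C * X⁻¹ * B) := by
    rw [hPinv, Matrix.mul_smul, Matrix.smul_mul]
    simp [smul_sub]
  show al ^ s * _ = X.det * (al • _ - C * P * B).det
  rw [hdetblock, hS, Matrix.det_smul]
  simp [Fintype.card_fin]
  ring
end

section
/- Let M = [[A,B],[C,D]] ∈ ℂ^{(n+s)×(n+s)} with A annihilated by a monic polynomial a of degree d, and let S(λ) = a(λ)(λI - D) - C·p(λI, A; a)·B. If λ₀ is an eigenvalue of A with algebraic multiplicity m < s, then λ₀ is a root of det(S(λ)) of multiplicity at least s - m. -/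
open Polynomial

open Matrix


variable {n : ℕ}

private lemma map_pow_C (A : Matrix (Fin n) (Fin n) ℂ) (k : ℕ) :
    (A.map (C : ℂ →+* ℂ[X])) ^ k = (A ^ k).map (C : ℂ →+* ℂ[X]) := by
  simpa [RingHom.mapMatrix_apply] using (map_pow ((C : ℂ →+* ℂ[X]).mapMatrix) A k).symm

private lemma central_smul_one (q : ℂ[X]) (w : Matrix (Fin n) (Fin n) ℂ[X]) :
    Commute (q • (1 : Matrix (Fin n) (Fin n) ℂ[X])) w := by
  unfold Commute SemiconjBy
  rw [smul_one_mul, mul_smul_one]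

private lemma tele (N : Matrix (Fin n) (Fin n) ℂ[X]) (k : ℕ) :
    ((X : ℂ[X]) • 1 - N) * (∑ i ∈ Finset.range k, ((X : ℂ[X]) ^ i) • N ^ (k - 1 - i)) =
      ((X : ℂ[X]) ^ k) • 1 - N ^ k := by
  induction k with
  | zero => simp
  | succ k ih =>
    have hsum : (∑ i ∈ Finset.range (k+1), ((X : ℂ[X]) ^ i) • N ^ (k + 1 - 1 - i)) =
        N * (∑ i ∈ Finset.range k, ((X : ℂ[X]) ^ i) • N ^ (k - 1 - i)) + ((X : ℂ[X]) ^ k) • 1 := by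
      rw [Finset.sum_range_succ, Finset.mul_sum]
      congr 1
      · apply Finset.sum_congr rfl
        intro i hi
        rw [Finset.mem_range] at hi
        have h1 : k + 1 - 1 - i = (k - 1 - i) + 1 := by omega
        rw [h1, pow_succ', mul_smul_comm]
      · simp
    rw [hsum, mul_add]
    have hcomm : ((X : ℂ[X]) • 1 - N) * N = N * ((X : ℂ[X]) • 1 - N) := by
      rw [sub_mul, mul_sub, smul_one_mul, mul_smul_one]
    rw [← mul_assoc, hcomm, mul_assoc, ih]
    simp only [mul_sub, mul_smul_comm, mul_one, sub_mul, smul_mul_assoc,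
      smul_one_mul, one_mul, mul_smul_one, smul_sub, smul_add, smul_smul, ← pow_succ', ← pow_succ]
    abel


/-- If `λ₀` is an eigenvalue of `A` of algebraic multiplicity `m < s`, then `λ₀` is a root
of `det(S(λ))` of multiplicity at least `s − m`, where
`S(λ) = a(λ)(λI − D) − C·p(λI, A; a)·B` for a monic annihilating polynomial `a` of `A`. -/
theorem stmt17 {n s : ℕ} (d : ℕ) (hd : 0 < d) (a : ℕ → ℂ) (hmonic : a d = 1)
    (A : Matrix (Fin n) (Fin n) ℂ) (B : Matrix (Fin n) (Fin s) ℂ)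
    (Cm : Matrix (Fin s) (Fin n) ℂ) (D : Matrix (Fin s) (Fin s) ℂ)
    (hann : ∑ k ∈ Finset.range (d + 1), a k • A ^ k = 0)
    (l₀ : ℂ) (m : ℕ)
    (hm : (Matrix.charpoly A).rootMultiplicity l₀ = m) (hms : m < s)
    (hroot : (Matrix.charpoly A).IsRoot l₀) :
    s - m ≤
      (Matrix.det
        ((∑ k ∈ Finset.range (d + 1), Polynomial.C (a k) * X ^ k) •
            ((X : ℂ[X]) • (1 : Matrix (Fin s) (Fin s) ℂ[X]) - D.map Polynomial.C) -
          (Cm.map Polynomial.C) *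
            (∑ k ∈ Finset.range (d + 1), Polynomial.C (a k) •
              ∑ i ∈ Finset.range k, ((X : ℂ[X]) ^ i) • (A.map Polynomial.C) ^ (k - 1 - i)) *
            (B.map Polynomial.C))).rootMultiplicity l₀ := by
  set A' : Matrix (Fin n) (Fin n) ℂ[X] := A.map Polynomial.C with hA'
  set B' : Matrix (Fin n) (Fin s) ℂ[X] := B.map Polynomial.C with hB'
  set Cm' : Matrix (Fin s) (Fin n) ℂ[X] := Cm.map Polynomial.C with hCm'
  set D' : Matrix (Fin s) (Fin s) ℂ[X] := D.map Polynomial.C with hD'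
  set aP : ℂ[X] := ∑ k ∈ Finset.range (d + 1), Polynomial.C (a k) * X ^ k with haP
  set pP : Matrix (Fin n) (Fin n) ℂ[X] :=
    ∑ k ∈ Finset.range (d + 1), Polynomial.C (a k) •
      ∑ i ∈ Finset.range k, ((X : ℂ[X]) ^ i) • A' ^ (k - 1 - i) with hpP
  set L : Matrix (Fin n) (Fin n) ℂ[X] := (X : ℂ[X]) • 1 - A' with hL
  set S : Matrix (Fin s) (Fin s) ℂ[X] :=
    aP • ((X : ℂ[X]) • (1 : Matrix (Fin s) (Fin s) ℂ[X]) - D') - Cm' * pP * B' with hS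
  -- charmatrix identifications
  have hchA : charmatrix A = L := by
    ext i j
    by_cases h : i = j
    · subst h; simp [hL, Matrix.one_apply, hA']
    · simp [h, hL, Matrix.one_apply, hA']
  have hchD : charmatrix D = (X : ℂ[X]) • (1 : Matrix (Fin s) (Fin s) ℂ[X]) - D' := by
    ext i j
    by_cases h : i = j
    · subst h; simp [Matrix.one_apply, hD']
    · simp [h, Matrix.one_apply, hD']
  -- key : L * pP = aP • 1
  have hmapsmul : ∀ (c : ℂ) (M : Matrix (Fin n) (Fin n) ℂ),
      (c • M).map (Polynomial.C : ℂ →+* ℂ[X]) = Polynomial.C c • M.map Polynomial.C := by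
    intro c M; ext i j; simp
  have hzero : ∑ k ∈ Finset.range (d + 1), Polynomial.C (a k) • A' ^ k = 0 := by
    ext i j
    have h := congrArg (fun M : Matrix (Fin n) (Fin n) ℂ => M i j) hann
    simp only [Matrix.sum_apply, Matrix.smul_apply, Matrix.zero_apply, smul_eq_mul] at h
    have heq : (∑ k ∈ Finset.range (d + 1), Polynomial.C (a k) • A' ^ k) i j
        = Polynomial.C (∑ k ∈ Finset.range (d + 1), a k * (A ^ k) i j) := by
      rw [map_sum, Matrix.sum_apply]
      apply Finset.sum_congr rfl
      intro k _
      rw [Matrix.smul_apply, map_pow_C, Matrix.map_apply, smul_eq_mul, ← C_mul]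
    rw [heq, h, map_zero, Matrix.zero_apply]
  have key1 : L * pP = aP • 1 := by
    rw [hpP, Finset.mul_sum]
    have : ∀ k ∈ Finset.range (d + 1),
        L * (Polynomial.C (a k) • ∑ i ∈ Finset.range k, ((X : ℂ[X]) ^ i) • A' ^ (k - 1 - i)) =
          (Polynomial.C (a k) * X ^ k) • 1 - Polynomial.C (a k) • A' ^ k := by
      intro k _
      rw [mul_smul_comm, hL, tele, smul_sub, smul_smul, mul_comm (Polynomial.C (a k))]
    rw [Finset.sum_congr rfl this, Finset.sum_sub_distrib, hzero, sub_zero, haP,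
      Finset.sum_smul]
  have hcommL : Commute L pP := by
    apply Commute.sum_right
    intro k _
    apply Commute.smul_right
    apply Commute.sum_right
    intro i _
    apply Commute.smul_right
    exact (central_smul_one X _).sub_left ((Commute.refl A').pow_right _)
  have key2 : pP * L = aP • 1 := by rw [← hcommL.eq, key1]
  -- block identity
  set Mbig : Matrix (Fin n ⊕ Fin s) (Fin n ⊕ Fin s) ℂ := Matrix.fromBlocks A B Cm D with hMbig
  have hN0 : charmatrix Mbig = Matrix.fromBlocks L (-B') (-Cm')
      ((X : ℂ[X]) • (1 : Matrix (Fin s) (Fin s) ℂ[X]) - D') := by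
    rw [hMbig, charmatrix_fromBlocks, hchA, hchD]
  set U : Matrix (Fin n ⊕ Fin s) (Fin n ⊕ Fin s) ℂ[X] :=
    Matrix.fromBlocks 1 0 (Cm' * pP) (aP • 1) with hU
  have hprod : U * charmatrix Mbig = Matrix.fromBlocks L (-B') 0 S := by
    have e21 : Cm' * pP * L + (aP • (1 : Matrix (Fin s) (Fin s) ℂ[X])) * -Cm' = 0 := by
      rw [Matrix.mul_assoc, key2, Matrix.mul_smul, Matrix.mul_one, Matrix.smul_mul,
        Matrix.one_mul, smul_neg, add_neg_cancel]
    have e22 : Cm' * pP * -B' + (aP • (1 : Matrix (Fin s) (Fin s) ℂ[X]))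
        * ((X : ℂ[X]) • 1 - D') = S := by
      rw [Matrix.smul_mul, Matrix.one_mul, Matrix.mul_neg, hS, neg_add_eq_sub]
    rw [hN0, hU, Matrix.fromBlocks_multiply, e21, e22, Matrix.one_mul, Matrix.one_mul,
      Matrix.zero_mul, Matrix.zero_mul, add_zero, add_zero]
  have hdetid : aP ^ s * Matrix.charpoly Mbig = Matrix.charpoly A * S.det := by
    have hthis := congrArg Matrix.det hprod
    rw [Matrix.det_mul, hU, Matrix.det_fromBlocks_zero₁₂, Matrix.det_one, one_mul,
      Matrix.det_smul, Matrix.det_one, mul_one, Matrix.det_fromBlocks_zero₂₁, ← hchA,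
      Fintype.card_fin] at hthis
    exact hthis
  -- nonvanishing
  have haPne : aP ≠ 0 := by
    intro h
    have : aP.coeff d = 0 := by rw [h]; simp
    rw [haP, finset_sum_coeff] at this
    simp only [coeff_C_mul, coeff_X_pow, mul_ite, mul_one, mul_zero] at this
    rw [Finset.sum_ite_eq] at this
    simp [Finset.mem_range, hmonic] at this
  have hMbigne : Matrix.charpoly Mbig ≠ 0 := (Matrix.charpoly_monic Mbig).ne_zero
  have hmulne : Matrix.charpoly A * S.det ≠ 0 := by
    rw [← hdetid]; exact mul_ne_zero (pow_ne_zero _ haPne) hMbigne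
  -- aP.eval l₀ = 0
  have haProot : aP.eval l₀ = 0 := by
    have hdet0 : (l₀ • 1 - A).det = 0 := by
      have h1 : ((charmatrix A).map (evalRingHom l₀)).det = 0 := by
        rw [show (charmatrix A).map (evalRingHom l₀)
          = (evalRingHom l₀).mapMatrix (charmatrix A) from rfl, ← RingHom.map_det]
        exact hroot
      have h2 : (charmatrix A).map (evalRingHom l₀) = l₀ • 1 - A := by
        ext i j
        by_cases h : i = j
        · subst h; simp [Matrix.one_apply]
        · simp [h, Matrix.one_apply]
      rwa [h2] at h1
    obtain ⟨v, hv0, hv⟩ := (Matrix.exists_mulVec_eq_zero_iff).mpr hdet0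
    have hAv : A *ᵥ v = l₀ • v := by
      rw [Matrix.sub_mulVec, Matrix.smul_mulVec, Matrix.one_mulVec, sub_eq_zero] at hv
      exact hv.symm
    have hpow : ∀ k, (A ^ k) *ᵥ v = (l₀ ^ k) • v := by
      intro k
      induction k with
      | zero => simp
      | succ k ih =>
        rw [pow_succ', ← Matrix.mulVec_mulVec, ih, Matrix.mulVec_smul, hAv, smul_smul,
          ← pow_succ]
    have hsummv : ∀ (t : Finset ℕ) (f : ℕ → Matrix (Fin n) (Fin n) ℂ),
        (∑ k ∈ t, f k) *ᵥ v = ∑ k ∈ t, f k *ᵥ v := by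
      intro t f
      induction t using Finset.cons_induction with
      | empty => simp [Matrix.zero_mulVec]
      | cons x t hx ih => rw [Finset.sum_cons, Finset.sum_cons, Matrix.add_mulVec, ih]
    have h0 : (∑ k ∈ Finset.range (d + 1), a k * l₀ ^ k) • v = 0 := by
      have := congrArg (fun M : Matrix (Fin n) (Fin n) ℂ => M *ᵥ v) hann
      simp only [Matrix.zero_mulVec] at this
      rw [hsummv] at this
      have heach : ∀ k ∈ Finset.range (d + 1),
          (a k • A ^ k) *ᵥ v = (a k * l₀ ^ k) • v := by
        intro k _
        rw [Matrix.smul_mulVec, hpow, smul_smul]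
      rw [Finset.sum_congr rfl heach, ← Finset.sum_smul] at this
      exact this
    have hscal : (∑ k ∈ Finset.range (d + 1), a k * l₀ ^ k) = 0 := by
      rcases smul_eq_zero.mp h0 with h | h
      · exact h
      · exact absurd h hv0
    rw [haP, eval_finset_sum]
    simpa using hscal
  -- conclude
  have hdvd : ((X : ℂ[X]) - Polynomial.C l₀) ^ s ∣ Matrix.charpoly A * S.det := by
    rw [← hdetid]
    exact Dvd.dvd.mul_right (pow_dvd_pow_of_dvd (dvd_iff_isRoot.mpr haProot) s) _
  have hle : s ≤ (Matrix.charpoly A * S.det).rootMultiplicity l₀ :=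
    (le_rootMultiplicity_iff hmulne).mpr hdvd
  rw [rootMultiplicity_mul hmulne, hm] at hle
  omega
end

section
/- Let A ∈ ℂ^{n×n} satisfy A² + (μ-α)A - (t-μ)I = μJ and AJ = JA = kJ (J the all-ones matrix), and for each vertex i let R_i be the (n-1)×(n-1) principal submatrix of A obtained by deleting row and column i. If the diagonal of A is zero and each row of A sums to k (so U = 0 and T₀S₀ = k in the partition for each i), then the characteristic polynomial of R_i is the same for all i; i.e., all vertex-deleted subgraphs of an undirected strongly regular graph are cospectral. -/
/-- All vertex-deleted subgraphs of an undirected strongly regular graph are cospectral: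
if `A` is a symmetric 0-1 matrix with zero diagonal satisfying
`A² + (μ−α)A − (t−μ)I = μJ` and `AJ = JA = kJ`, with each row summing to `k`, then the
characteristic polynomials of all principal submatrices obtained by deleting one row and
the corresponding column coincide. -/
theorem stmt19 {n : ℕ} (A : Matrix (Fin (n + 1)) (Fin (n + 1)) ℂ) (k μ α t : ℂ)
    (J : Matrix (Fin (n + 1)) (Fin (n + 1)) ℂ) (hJ : J = Matrix.of fun _ _ => (1 : ℂ))
    (hsym : A.transpose = A)
    (h01 : ∀ i j, A i j = 0 ∨ A i j = 1)
    (hdiag : ∀ i, A i i = 0)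
    (hrow : ∀ i, ∑ j, A i j = k)
    (h1 : A ^ 2 + (μ - α) • A - (t - μ) • (1 : Matrix (Fin (n + 1)) (Fin (n + 1)) ℂ) = μ • J)
    (h2 : A * J = k • J) (h3 : J * A = k • J) :
    ∀ i j : Fin (n + 1),
      (A.submatrix i.succAbove i.succAbove).charpoly =
        (A.submatrix j.succAbove j.succAbove).charpoly := by
  intro i j
  -- Step 1: the charpoly of the vertex-deleted matrix is the diagonal entry of the
  -- adjugate of the characteristic matrix of `A`.
  have key : ∀ i : Fin (n + 1),
      (A.submatrix i.succAbove i.succAbove).charpoly = (Matrix.adjugate A.charmatrix) i i := by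
    intro i
    rw [Matrix.adjugate_fin_succ_eq_det_submatrix]
    have hsub : (A.charmatrix).submatrix i.succAbove i.succAbove
        = (A.submatrix i.succAbove i.succAbove).charmatrix := by
      ext a b
      by_cases h : a = b
      · subst h; simp
      · rw [Matrix.submatrix_apply, Matrix.charmatrix_apply_ne _ _ _ h,
          Matrix.charmatrix_apply_ne, Matrix.submatrix_apply]
        exact fun hh => h (Fin.succAbove_right_injective hh)
    rw [hsub, Matrix.charpoly, ← two_mul, pow_mul]
    norm_num
  rw [key i, key j]
  -- Step 2: the two polynomials agree at all but finitely many complex numbers.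
  apply Polynomial.eq_of_infinite_eval_eq
  have heval : ∀ (x : ℂ), x ≠ k → x ^ 2 + (μ - α) * x - (t - μ) ≠ 0 →
      ∀ l : Fin (n + 1), Polynomial.eval x ((Matrix.adjugate A.charmatrix) l l)
        = ((x • (1 : Matrix (Fin (n + 1)) (Fin (n + 1)) ℂ) - A).det)
            * ((x ^ 2 + (μ - α) * x - (t - μ))⁻¹ * (x + μ - α)
              + (x ^ 2 + (μ - α) * x - (t - μ))⁻¹ * μ * (x - k)⁻¹) := by
    intro x hxk hq l
    set q : ℂ := x ^ 2 + (μ - α) * x - (t - μ) with hqdef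
    set b : ℂ := q⁻¹ with hb
    set a : ℂ := b * (x + μ - α) with ha
    set c : ℂ := b * μ * (x - k)⁻¹ with hc
    set M : Matrix (Fin (n + 1)) (Fin (n + 1)) ℂ := x • 1 - A with hM
    set Y : Matrix (Fin (n + 1)) (Fin (n + 1)) ℂ := a • 1 + b • A + c • J with hY
    have hxk' : x - k ≠ 0 := sub_ne_zero.mpr hxk
    have hA2 : A ^ 2 = μ • J + (t - μ) • (1 : Matrix (Fin (n + 1)) (Fin (n + 1)) ℂ)
        - (μ - α) • A := by rw [← h1]; abel
    -- M * Y = 1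
    have hmul : M * Y = 1 := by
      have expand : M * Y = (x * a - b * (t - μ)) • (1 : Matrix (Fin (n + 1)) (Fin (n + 1)) ℂ)
          + (x * b - a + b * (μ - α)) • A + (x * c - b * μ - c * k) • J := by
        have hAA : A * A = A ^ 2 := (sq A).symm
        rw [hY, hM, sub_mul, Matrix.smul_mul, one_mul, mul_add, mul_add,
          Matrix.mul_smul, Matrix.mul_smul, Matrix.mul_smul, Matrix.mul_one, hAA, hA2, h2]
        module
      have e1 : x * a - b * (t - μ) = 1 := by
        rw [ha, hb]; field_simp; ring
      have e2 : x * b - a + b * (μ - α) = 0 := by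
        rw [ha]; ring
      have e3 : x * c - b * μ - c * k = 0 := by
        rw [hc, hb]; field_simp; ring
      rw [expand, e1, e2, e3, one_smul, zero_smul, zero_smul, add_zero, add_zero]
    -- hence adjugate M = det M • Y
    haveI : Invertible M := invertibleOfRightInverse M Y hmul
    have hadj : Matrix.adjugate M = M.det • Y := by
      have h4 : M * Matrix.adjugate M = M * (M.det • Y) := by
        rw [Matrix.mul_adjugate, Matrix.mul_smul, hmul]
      have := congrArg (fun Z => ⅟M * Z) h4
      simpa [← Matrix.mul_assoc, invOf_mul_self] using this
    -- evaluate the adjugate of the characteristic matrix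
    have hmap : (A.charmatrix).map (Polynomial.evalRingHom x) = M := by
      ext a' b'
      by_cases h : a' = b'
      · subst h
        simp [Matrix.charmatrix_apply_eq, hM, Matrix.sub_apply, Matrix.smul_apply,
          Matrix.one_apply]
      · simp [Matrix.charmatrix_apply_ne _ _ _ h, hM, Matrix.sub_apply, Matrix.smul_apply,
          Matrix.one_apply, h]
    have hmadj : (Matrix.adjugate A.charmatrix).map (Polynomial.evalRingHom x)
        = Matrix.adjugate M := by
      have := (Polynomial.evalRingHom x).map_adjugate A.charmatrix
      simp only [RingHom.mapMatrix_apply] at this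
      rw [this, hmap]
    have hl : Polynomial.eval x ((Matrix.adjugate A.charmatrix) l l)
        = (Matrix.adjugate M) l l := by
      rw [← hmadj]; rfl
    rw [hl, hadj]
    have hYll : Y l l = a + c := by
      simp [hY, hJ, Matrix.add_apply, Matrix.smul_apply, Matrix.one_apply, hdiag l]
    simp only [Matrix.smul_apply, hYll, smul_eq_mul]
  -- the set of good points is infinite
  have hsubset : {x : ℂ | x ≠ k ∧ x ^ 2 + (μ - α) * x - (t - μ) ≠ 0} ⊆
      {x : ℂ | Polynomial.eval x ((Matrix.adjugate A.charmatrix) i i)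
        = Polynomial.eval x ((Matrix.adjugate A.charmatrix) j j)} := by
    rintro x ⟨hxk, hq⟩
    simp only [Set.mem_setOf_eq]
    rw [heval x hxk hq i, heval x hxk hq j]
  refine Set.Infinite.mono hsubset ?_
  have hfin : ({k} ∪ {x : ℂ | (Polynomial.X ^ 2 + Polynomial.C (μ - α) * Polynomial.X
      - Polynomial.C (t - μ)).IsRoot x}).Finite := by
    refine (Set.finite_singleton k).union (Polynomial.finite_setOf_isRoot ?_)
    intro h
    have h2 : (Polynomial.X ^ 2 + Polynomial.C (μ - α) * Polynomial.X
        - Polynomial.C (t - μ) : Polynomial ℂ).coeff 2 = 0 := by rw [h]; simp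
    simp [Polynomial.coeff_X, Polynomial.coeff_C] at h2
  have := hfin.infinite_compl
  refine this.mono ?_
  intro x hx
  simp only [Set.mem_compl_iff, Set.mem_union, Set.mem_singleton_iff, Set.mem_setOf_eq,
    Polynomial.IsRoot, not_or] at hx
  refine ⟨hx.1, ?_⟩
  intro h
  exact hx.2 (by simp [h])
end
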